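/- Let f be a pure ω-braid. Then f ∼ id_ω (f is homotopic relative to {0,1} to the constant path at id_ω) if and only if f|_n ∼ id_n for every n ∈ ω, where f|_n is the restriction of f to the coordinates {0,…,n−1}. -/

import Mathlib

set_option maxHeartbeats 2000000


open unitInterval

noncomputable section

/-- The configuration space `F_X ⊆ ℂ^X` of injective functions `X → ℂ`,
with the subspace topology from the product topology on `ℂ^X`. -/
abbrev Config (X : Set ℂ) : Type := {u : X → ℂ // Function.Injective u}

/-- The identity configuration `id_X ∈ F_X`. -/
def idConfig (X : Set ℂ) : Config X :=
  ⟨fun x => (x : ℂ), fun _ _ h => Subtype.coe_injective h⟩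

/-- The configuration given by a permutation `σ ∈ Σ_X`. -/
def permConfig {X : Set ℂ} (e : Equiv.Perm X) : Config X :=
  ⟨fun x => (e x : ℂ), fun _ _ h => e.injective (Subtype.coe_injective h)⟩

/-- An `X`-braid: a path in `F_X` from `id_X` to a point of `Σ_X`. -/
structure BraidPath (X : Set ℂ) where
  toFun : C(I, Config X)
  source' : toFun 0 = idConfig X
  target' : ∃ e : Equiv.Perm X, toFun 1 = permConfig e

/-- Two `X`-braids are equivalent if they are homotopic relative to `{0,1}`. -/
def BraidEquiv {X : Set ℂ} (f g : BraidPath X) : Prop :=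
  f.toFun.HomotopicRel g.toFun {0, 1}

/-- `ω`, the set of natural numbers regarded as a subset of `ℂ`. -/
def omegaSet : Set ℂ := {z : ℂ | ∃ k : ℕ, z = k}

/-- `n = {0, 1, …, n-1}` regarded as a subset of `ℂ`. -/
def finSet (n : ℕ) : Set ℂ := {z : ℂ | ∃ i : ℕ, i < n ∧ z = i}

lemma finSet_mono {n m : ℕ} (h : n ≤ m) : finSet n ⊆ finSet m := by
  rintro z ⟨i, hi, rfl⟩
  exact ⟨i, lt_of_lt_of_le hi h, rfl⟩

lemma finSet_subset_omegaSet (n : ℕ) : finSet n ⊆ omegaSet := by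
  rintro z ⟨i, _, rfl⟩
  exact ⟨i, rfl⟩

/-- Restriction `F_X → F_Y` of configurations, for `Y ⊆ X`. -/
def restrictConfig {X Y : Set ℂ} (h : Y ⊆ X) : C(Config X, Config Y) where
  toFun u := ⟨fun y => u.1 ⟨y.1, h y.2⟩,
    fun a b hab => Subtype.ext (congrArg (Subtype.val : {z : ℂ // z ∈ X} → ℂ) (u.2 hab))⟩
  continuous_toFun := by
    apply Continuous.subtype_mk
    exact continuous_pi fun y => (continuous_apply _).comp continuous_subtype_val

/-- The restriction `f|_Y` of a path in `F_X` to a path in `F_Y`, for `Y ⊆ X`. -/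
def restrictPath {X Y : Set ℂ} (h : Y ⊆ X) (f : C(I, Config X)) : C(I, Config Y) :=
  (restrictConfig h).comp f

namespace L27


/-- clamp a real number into `I`. -/
def pr (x : ℝ) : I := Set.projIcc 0 1 zero_le_one x

lemma continuous_pr : Continuous pr :=
  (continuous_projIcc : Continuous (Set.projIcc (0:ℝ) 1 zero_le_one))

lemma pr_of_mem {x : ℝ} (h0 : 0 ≤ x) (h1 : x ≤ 1) : ((pr x : I) : ℝ) = x := by
  rw [pr, Set.projIcc_of_mem _ ⟨h0, h1⟩]

lemma pr_coe (u : I) : pr (u : ℝ) = u :=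
  Subtype.ext (pr_of_mem u.2.1 u.2.2)

lemma pr_of_le {x : ℝ} (h : x ≤ 0) : pr x = 0 := by
  apply Subtype.ext
  rw [pr, Set.projIcc_of_le_left _ h]; rfl

lemma pr_of_ge {x : ℝ} (h : 1 ≤ x) : pr x = 1 := by
  apply Subtype.ext
  rw [pr, Set.projIcc_of_right_le _ h]; rfl

/-- bump function used for the lifting lemma -/
def bump (δ r : ℝ) : ℝ := max 0 (min 1 ((δ/3 - r) / (δ/12)))

lemma bump_nonneg (δ r : ℝ) : 0 ≤ bump δ r := le_max_left _ _

lemma bump_le_one (δ r : ℝ) : bump δ r ≤ 1 :=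
  max_le zero_le_one (min_le_left _ _)

lemma bump_of_le {δ r : ℝ} (hδ : 0 < δ) (h : r ≤ δ/4) : bump δ r = 1 := by
  have h12 : 0 < δ/12 := by linarith
  have h1 : (1:ℝ) ≤ (δ/3 - r) / (δ/12) := by
    rw [le_div_iff₀ h12]; linarith
  rw [bump, min_eq_left h1, max_eq_right zero_le_one]

lemma bump_of_ge {δ r : ℝ} (hδ : 0 < δ) (h : δ/3 ≤ r) : bump δ r = 0 := by
  have h12 : 0 < δ/12 := by linarith
  have h0 : (δ/3 - r) / (δ/12) ≤ 0 := div_nonpos_of_nonpos_of_nonneg (by linarith) h12.le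
  exact max_eq_left (le_trans (min_le_right _ _) h0)

lemma continuous_bump (δ : ℝ) : Continuous fun r => bump δ r := by
  unfold bump; fun_prop

lemma norm_coe_mul_le {c : ℝ} (h0 : 0 ≤ c) (h1 : c ≤ 1) (w : ℂ) :
    ‖(c:ℂ) * w‖ ≤ ‖w‖ := by
  rw [norm_mul, Complex.norm_real]
  calc |c| * ‖w‖ ≤ 1 * ‖w‖ := by
        apply mul_le_mul_of_nonneg_right _ (norm_nonneg _)
        rw [abs_le]; exact ⟨by linarith, h1⟩
    _ = ‖w‖ := one_mul _

/-- one step of the point-pushing construction avoids the moved points. -/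
lemma move_step {κ : Type*} [Fintype κ] {δ : ℝ} (hδ : 0 < δ)
    (p q : κ → ℂ) (hpq : ∀ i, dist (q i) (p i) ≤ δ/10)
    (hp : ∀ i j : κ, i ≠ j → δ ≤ dist (p i) (p j))
    (z : ℂ) (hz : ∀ i, z ≠ p i) :
    ∀ i, (z + ∑ j, (bump δ (dist z (p j)) : ℂ) * (q j - p j)) ≠ q i := by
  intro i hcontra
  by_cases hA : ∃ i₀, dist z (p i₀) < δ/3
  · obtain ⟨i₀, hi₀⟩ := hA
    have hothers : ∀ j, j ≠ i₀ → 2*δ/3 ≤ dist z (p j) := by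
      intro j hj
      have h1 := hp i₀ j (fun h => hj h.symm)
      have h2 := dist_triangle (p i₀) z (p j)
      have h3 : dist (p i₀) z = dist z (p i₀) := dist_comm _ _
      linarith
    have hsum : ∑ j, (bump δ (dist z (p j)) : ℂ) * (q j - p j)
        = (bump δ (dist z (p i₀)) : ℂ) * (q i₀ - p i₀) := by
      refine Finset.sum_eq_single i₀ (fun j _ hj => ?_) (fun h => absurd (Finset.mem_univ _) h)
      rw [bump_of_ge hδ (by linarith [hothers j hj])]
      simp
    rw [hsum] at hcontra
    set c := bump δ (dist z (p i₀)) with hc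
    have hc0 : 0 ≤ c := bump_nonneg _ _
    have hc1 : c ≤ 1 := bump_le_one _ _
    rcases eq_or_ne i i₀ with rfl | hne
    · have hzp : z - p i = ((1 - c : ℝ):ℂ) * (q i - p i) := by
        push_cast
        linear_combination hcontra
      have hd : dist z (p i) ≤ δ/10 := by
        rw [dist_eq_norm, hzp]
        calc ‖((1 - c : ℝ):ℂ) * (q i - p i)‖ ≤ ‖q i - p i‖ :=
              norm_coe_mul_le (by linarith) (by linarith) _
          _ = dist (q i) (p i) := (dist_eq_norm _ _).symm
          _ ≤ δ/10 := hpq i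
      have hceq : c = 1 := hc ▸ bump_of_le hδ (by linarith)
      rw [hceq] at hzp
      push_cast at hzp
      simp only [sub_self, zero_mul] at hzp
      exact hz i (by rwa [sub_eq_zero] at hzp)
    · have h1 : dist z (q i) ≤ δ/10 := by
        have he : z - q i = -((c:ℂ) * (q i₀ - p i₀)) := by linear_combination hcontra
        rw [dist_eq_norm, he, norm_neg]
        calc ‖(c:ℂ) * (q i₀ - p i₀)‖ ≤ ‖q i₀ - p i₀‖ := norm_coe_mul_le hc0 hc1 _
          _ = dist (q i₀) (p i₀) := (dist_eq_norm _ _).symm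
          _ ≤ δ/10 := hpq i₀
      have h3 : 2*δ/3 ≤ dist z (p i) := hothers i hne
      have h4 : dist z (p i) ≤ dist z (q i) + dist (q i) (p i) := dist_triangle _ _ _
      linarith [hpq i]
  · push_neg at hA
    have hsum : ∑ j, (bump δ (dist z (p j)) : ℂ) * (q j - p j) = 0 := by
      refine Finset.sum_eq_zero fun j _ => ?_
      rw [bump_of_ge hδ (hA j)]
      simp
    rw [hsum, add_zero] at hcontra
    have := hA i
    rw [hcontra] at this
    have : dist (q i) (p i) ≥ δ/3 := this
    linarith [hpq i]


lemma pr_le {x : ℝ} (h0 : 0 ≤ x) : ((pr x : I) : ℝ) ≤ x := by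
  rcases le_or_gt x 1 with h | h
  · rw [pr_of_mem h0 h]
  · rw [pr_of_ge h.le]; exact h.le
lemma exists_delta {κ : Type*} [Fintype κ] {W : Type*} [TopologicalSpace W] [CompactSpace W]
    (b : C(W, κ → ℂ)) (hb : ∀ w, ∀ i j : κ, i ≠ j → b w i ≠ b w j) :
    ∃ δ : ℝ, 0 < δ ∧ ∀ w, ∀ i j : κ, i ≠ j → δ ≤ dist (b w i) (b w j) := by
  have key : ∀ s : Finset (κ × κ),
      ∃ δ : ℝ, 0 < δ ∧ ∀ w, ∀ ij ∈ s, ij.1 ≠ ij.2 → δ ≤ dist (b w ij.1) (b w ij.2) := by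
    intro s
    classical
    induction s using Finset.induction with
    | empty => exact ⟨1, one_pos, fun w ij h => absurd h (Finset.notMem_empty _)⟩
    | @insert ij s hij IH =>
      obtain ⟨δ₁, hδ₁, h₁⟩ := IH
      by_cases hd : ij.1 = ij.2
      · exact ⟨δ₁, hδ₁, fun w ij' hmem hne => by
          rcases Finset.mem_insert.mp hmem with rfl | hmem'
          · exact absurd hd hne
          · exact h₁ w ij' hmem' hne⟩
      · rcases isEmpty_or_nonempty W with hW | hW
        · exact ⟨δ₁, hδ₁, fun w => (IsEmpty.false w).elim⟩
        · have hcont : Continuous fun w => dist (b w ij.1) (b w ij.2) := by fun_prop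
          obtain ⟨w₀, -, hw₀⟩ := isCompact_univ.exists_isMinOn (Set.univ_nonempty)
            hcont.continuousOn
          have hpos : 0 < dist (b w₀ ij.1) (b w₀ ij.2) :=
            dist_pos.mpr (hb w₀ ij.1 ij.2 hd)
          refine ⟨min δ₁ (dist (b w₀ ij.1) (b w₀ ij.2)), lt_min hδ₁ hpos, ?_⟩
          intro w ij' hmem hne
          rcases Finset.mem_insert.mp hmem with rfl | hmem'
          · exact le_trans (min_le_right _ _) (hw₀ (Set.mem_univ w))
          · exact le_trans (min_le_left _ _) (h₁ w ij' hmem' hne)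
  obtain ⟨δ, hδ, h⟩ := key Finset.univ
  exact ⟨δ, hδ, fun w i j hne => h w (i, j) (Finset.mem_univ _) hne⟩

lemma exists_modulus {κ : Type*} [Fintype κ] {X : Type*} [MetricSpace X] [CompactSpace X]
    (b : C(X × I, κ → ℂ)) {ε : ℝ} (hε : 0 < ε) :
    ∃ m : ℕ, ∀ (x : X) (u u' : I), |(u:ℝ) - (u':ℝ)| ≤ 1/(m+1) →
      ∀ i, dist (b (x, u) i) (b (x, u') i) ≤ ε := by
  have huc : UniformContinuous b := CompactSpace.uniformContinuous_of_continuous b.continuous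
  obtain ⟨d, hd, hball⟩ := Metric.uniformContinuous_iff.mp huc ε hε
  obtain ⟨m, hm⟩ := exists_nat_one_div_lt hd
  refine ⟨m, fun x u u' hle i => ?_⟩
  have hdist : dist (x, u) (x, u') < d := by
    rw [Prod.dist_eq]
    have h2 : dist u u' = |(u:ℝ) - (u':ℝ)| := rfl
    simp only [dist_self]
    rw [max_lt_iff]
    constructor
    · exact hd
    · calc dist u u' = |(u:ℝ) - (u':ℝ)| := rfl
        _ ≤ 1/(m+1) := hle
        _ < d := by exact_mod_cast hm
  have := hball hdist
  calc dist (b (x,u) i) (b (x,u') i) ≤ dist (b (x,u)) (b (x,u')) := dist_le_pi_dist _ _ i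
    _ ≤ ε := this.le


lemma lift_point {κ : Type*} [Fintype κ] {X : Type*} [MetricSpace X] [CompactSpace X]
    (b : C(X × I, κ → ℂ)) (hb : ∀ w, ∀ i j : κ, i ≠ j → b w i ≠ b w j)
    (init : C(X, ℂ)) (hinit : ∀ x i, init x ≠ b (x, 0) i) :
    ∃ Z : C(X × I, ℂ),
      (∀ w i, Z w ≠ b w i) ∧
      (∀ x, Z (x, 0) = init x) ∧
      (∀ x (u u' : I), u ≤ u' → (∀ v : I, u ≤ v → v ≤ u' → b (x, v) = b (x, u)) →
        Z (x, u') = Z (x, u)) := by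
  obtain ⟨δ, hδ, hsep⟩ := exists_delta b hb
  obtain ⟨m, hm⟩ := exists_modulus b (show (0:ℝ) < δ/10 by linarith)
  have hM : (0:ℝ) < (m:ℝ) + 1 := by positivity
  have main : ∀ j : ℕ, ∃ Z : C(X × I, ℂ),
      (∀ x, Z (x, 0) = init x) ∧
      (∀ x (u : I), (u:ℝ) ≤ (j:ℝ)/((m:ℝ)+1) → ∀ i, Z (x, u) ≠ b (x, u) i) ∧
      (∀ x (u u' : I), (j:ℝ)/((m:ℝ)+1) ≤ (u:ℝ) → (j:ℝ)/((m:ℝ)+1) ≤ (u':ℝ) →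
        Z (x,u) = Z (x,u')) ∧
      (∀ x (u u' : I), u ≤ u' → (∀ v : I, u ≤ v → v ≤ u' → b (x, v) = b (x, u)) →
        Z (x, u') = Z (x, u)) := by
    intro j
    induction j with
    | zero =>
      refine ⟨init.comp ⟨Prod.fst, continuous_fst⟩, fun x => rfl, ?_,
        fun x u u' _ _ => rfl, fun x u u' _ _ => rfl⟩
      intro x u hu i
      have hu0 : u = 0 := by
        apply Subtype.ext
        have h1 : (u:ℝ) ≤ 0 := by simpa using hu
        exact le_antisymm h1 u.2.1
      subst hu0
      exact hinit x i
    | succ j IH =>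
      obtain ⟨Zj, hZ0, hZav, hZfr, hZst⟩ := IH
      set c0 : ℝ := (j:ℝ)/((m:ℝ)+1) with hc0def
      set c1 : ℝ := ((j:ℝ)+1)/((m:ℝ)+1) with hc1def
      have hc0nn : 0 ≤ c0 := by positivity
      have hc1nn : 0 ≤ c1 := by positivity
      have hc01 : c0 < c1 := by
        rw [hc0def, hc1def, div_lt_div_iff₀ hM hM]; nlinarith
      have hdiff : c1 - c0 = 1/((m:ℝ)+1) := by
        rw [hc0def, hc1def, div_sub_div_same]; norm_num
      set T : I := pr c0 with hTdef
      set g : X → ℂ := fun x => Zj (x, T) with hgdef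
      have hgcont : Continuous g := Zj.continuous.comp (by fun_prop)
      set cv : I → I := fun u => pr (min (u:ℝ) c1) with hcvdef
      have hcvcont : Continuous cv :=
        continuous_pr.comp ((continuous_induced_dom).min continuous_const)
      set Sf : X × I → ℂ := fun w =>
        g w.1 + ∑ i, (bump δ (dist (g w.1) (b (w.1, T) i)) : ℂ) *
          (b (w.1, cv w.2) i - b (w.1, T) i) with hSfdef
      have hbT : Continuous fun w : X × I => b (w.1, T) :=
        b.continuous.comp (continuous_fst.prodMk continuous_const)
      have hbcv : Continuous fun w : X × I => b (w.1, cv w.2) :=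
        b.continuous.comp (continuous_fst.prodMk (hcvcont.comp continuous_snd))
      have hScont : Continuous Sf := by
        apply Continuous.add (hgcont.comp continuous_fst)
        apply continuous_finset_sum
        intro i _
        apply Continuous.mul
        · exact Complex.continuous_ofReal.comp ((continuous_bump δ).comp
            (((hgcont.comp continuous_fst).dist ((continuous_apply i).comp hbT))))
        · exact ((continuous_apply i).comp hbcv).sub ((continuous_apply i).comp hbT)
      -- boundary agreement
      have hbd : ∀ w : X × I, ((w.2 : I) : ℝ) = c0 → Zj w = Sf w := by
        rintro ⟨x, u⟩ hw
        simp only at hw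
        have hTu : T = u := by
          apply Subtype.ext
          rw [hTdef, ← hw, pr_of_mem u.2.1 u.2.2]
        have hcvu : cv u = u := by
          apply Subtype.ext
          rw [hcvdef]
          simp only
          rw [min_eq_left (by rw [hw]; exact hc01.le), pr_of_mem u.2.1 u.2.2]
        have hsum0 : ∀ i : κ, (bump δ (dist (g x) (b (x, T) i)) : ℂ) *
            (b (x, cv u) i - b (x, T) i) = 0 := by
          intro i
          rw [hcvu, ← hTu, sub_self, mul_zero]
        show Zj (x, u) = Sf (x, u)
        have : Sf (x, u) = g x := by
          rw [hSfdef]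
          simp only
          rw [Finset.sum_eq_zero (fun i _ => hsum0 i), add_zero]
        rw [this, hgdef, hTu]
      set ZN : X × I → ℂ := fun w => if ((w.2 : I) : ℝ) ≤ c0 then Zj w else Sf w with hZNdef
      have hZNcont : Continuous ZN := by
        apply Continuous.if_le Zj.continuous hScont
          (continuous_induced_dom.comp continuous_snd) continuous_const
        exact fun w hw => hbd w hw
      refine ⟨⟨ZN, hZNcont⟩, ?_, ?_, ?_, ?_⟩
      · -- initial
        intro x
        show ZN (x, 0) = init x
        rw [hZNdef]
        simp only
        rw [if_pos (by exact_mod_cast hc0nn)]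
        exact hZ0 x
      · -- avoidance
        intro x u hu i
        show ZN (x, u) ≠ b (x, u) i
        rw [hZNdef]; simp only
        by_cases h : (u:ℝ) ≤ c0
        · rw [if_pos h]; exact hZav x u h i
        · rw [if_neg h]
          push_neg at h
          have hu1 : (u:ℝ) ≤ 1 := u.2.2
          have hTval : (T:ℝ) = c0 := pr_of_mem hc0nn (le_trans h.le hu1)
          have huc1 : (u:ℝ) ≤ c1 := by
            rw [hc1def]; push_cast at hu; exact hu
          have hcvu : cv u = u := by
            apply Subtype.ext
            rw [hcvdef]; simp only
            rw [min_eq_left huc1, pr_of_mem u.2.1 u.2.2]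
          have happ := move_step hδ (b (x, T)) (b (x, u))
            (fun i' => by
              apply hm
              rw [hTval]
              rw [abs_le]
              constructor
              · linarith
              · linarith [hdiff, huc1])
            (fun i' j' hij => hsep (x, T) i' j' hij)
            (g x)
            (fun i' => hZav x T (le_of_eq hTval) i')
          have := happ i
          rw [hSfdef]; simp only
          rw [hcvu]
          exact this
      · -- freeze
        intro x u u' hu hu'
        push_cast at hu hu'
        have key : ∀ v : I, c1 ≤ (v:ℝ) → ZN (x, v) = g x + ∑ i,
            (bump δ (dist (g x) (b (x, T) i)) : ℂ) * (b (x, pr c1) i - b (x, T) i) := by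
          intro v hv
          rw [hZNdef]; simp only
          rw [if_neg (by push_neg; exact lt_of_lt_of_le hc01 hv)]
          rw [hSfdef]; simp only
          have : cv v = pr c1 := by rw [hcvdef]; simp only [min_eq_right hv]
          rw [this]
        show ZN (x, u) = ZN (x, u')
        rw [key u (by rw [hc1def]; exact hu), key u' (by rw [hc1def]; exact hu')]
      · -- stationarity
        intro x u u' huu' hconst
        show ZN (x, u') = ZN (x, u)
        have hcoe : (u:ℝ) ≤ (u':ℝ) := huu'
        by_cases h1 : (u':ℝ) ≤ c0
        · rw [hZNdef]; simp only
          rw [if_pos h1, if_pos (le_trans hcoe h1)]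
          exact hZst x u u' huu' hconst
        · push_neg at h1
          have hc0lt1 : c0 < 1 := lt_of_lt_of_le h1 u'.2.2
          have hTval : (T:ℝ) = c0 := pr_of_mem hc0nn hc0lt1.le
          by_cases h2 : (u:ℝ) ≤ c0
          · -- mixed case
            have hTu : u ≤ T := by
              rw [← Subtype.coe_le_coe, hTval]; exact h2
            have hTu' : T ≤ u' := by
              rw [← Subtype.coe_le_coe, hTval]; exact h1.le
            have hv'mem : 0 ≤ min ((u':ℝ)) c1 ∧ min ((u':ℝ)) c1 ≤ 1 :=
              ⟨le_min u'.2.1 hc1nn, le_trans (min_le_left _ _) u'.2.2⟩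
            have hv'val : ((cv u' : I) : ℝ) = min ((u':ℝ)) c1 := by
              rw [hcvdef]; exact pr_of_mem hv'mem.1 hv'mem.2
            have hv'l : u ≤ cv u' := by
              rw [← Subtype.coe_le_coe, hv'val]
              exact le_min hcoe (le_trans h2 hc01.le)
            have hv'r : cv u' ≤ u' := by
              rw [← Subtype.coe_le_coe, hv'val]
              exact min_le_left _ _
            have hbv' : b (x, cv u') = b (x, u) := hconst _ hv'l hv'r
            have hbTu : b (x, T) = b (x, u) := hconst _ hTu hTu'
            rw [hZNdef]; simp only
            rw [if_neg (by push_neg; exact h1), if_pos h2]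
            have hLHS : Sf (x, u') = g x := by
              rw [hSfdef]; simp only
              rw [Finset.sum_eq_zero, add_zero]
              intro i _
              rw [hbv', hbTu, sub_self, mul_zero]
            rw [hLHS, hgdef]
            exact hZst x u T hTu (fun v hv1 hv2 => hconst v hv1 (le_trans hv2 hTu'))
          · -- both beyond
            push_neg at h2
            rw [hZNdef]; simp only
            rw [if_neg (by push_neg; exact h1), if_neg (by push_neg; exact h2)]
            rcases le_or_gt c1 (u:ℝ) with hcu | hcu
            · have e1 : cv u = pr c1 := by rw [hcvdef]; simp only [min_eq_right hcu]
              have e2 : cv u' = pr c1 := by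
                rw [hcvdef]; simp only [min_eq_right (le_trans hcu hcoe)]
              rw [hSfdef]; simp only
              rw [e1, e2]
            · have e1 : cv u = u := by
                apply Subtype.ext
                rw [hcvdef]; simp only
                rw [min_eq_left hcu.le, pr_of_mem u.2.1 u.2.2]
              have hv'mem : 0 ≤ min ((u':ℝ)) c1 ∧ min ((u':ℝ)) c1 ≤ 1 :=
                ⟨le_min u'.2.1 hc1nn, le_trans (min_le_left _ _) u'.2.2⟩
              have hv'val : ((cv u' : I) : ℝ) = min ((u':ℝ)) c1 := by
                rw [hcvdef]; exact pr_of_mem hv'mem.1 hv'mem.2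
              have hbv' : b (x, cv u') = b (x, u) := by
                apply hconst
                · rw [← Subtype.coe_le_coe, hv'val]
                  exact le_min hcoe hcu.le
                · rw [← Subtype.coe_le_coe, hv'val]
                  exact min_le_left _ _
              have hbu : b (x, cv u) = b (x, u) := by rw [e1]
              rw [hSfdef]; simp only
              rw [hbv', hbu]
  obtain ⟨Z, hZ0, hZav, _, hZst⟩ := main (m+1)
  refine ⟨Z, ?_, hZ0, hZst⟩
  rintro ⟨x, u⟩ i
  apply hZav
  push_cast
  rw [div_self hM.ne']
  exact u.2.2


lemma mem_finSet_iff {m k : ℕ} : ((k:ℂ) ∈ finSet m) ↔ k < m := by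
  constructor
  · rintro ⟨i, hi, he⟩
    have : k = i := Nat.cast_injective he
    rwa [this]
  · intro h; exact ⟨k, h, rfl⟩

attribute [local instance] Classical.propDecidable

def idxv {m : ℕ} (w : ↥(finSet m)) : ℕ := w.2.choose
lemma idxv_lt {m : ℕ} (w : ↥(finSet m)) : idxv w < m := w.2.choose_spec.1
lemma idxv_coe {m : ℕ} (w : ↥(finSet m)) : ((idxv w : ℕ) : ℂ) = (w : ℂ) :=
  w.2.choose_spec.2.symm

instance finSet_finite (m : ℕ) : Finite ↥(finSet m) := by
  apply Finite.of_injective (fun w => (⟨idxv w, idxv_lt w⟩ : Fin m))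
  intro a b h
  apply Subtype.ext
  rw [← idxv_coe a, ← idxv_coe b]
  simp only [Fin.mk.injEq] at h
  rw [h]

def el {m : ℕ} (k : ℕ) (h : k < m) : ↥(finSet m) := ⟨(k:ℂ), ⟨k, h, rfl⟩⟩

lemma val_eq_n {n : ℕ} (w : ↥(finSet (n+1))) (hw : (w:ℂ) ∉ finSet n) : (w:ℂ) = (n:ℂ) := by
  obtain ⟨i, hi, he⟩ := w.2
  rcases Nat.lt_succ_iff_lt_or_eq.mp hi with h | rfl
  · exact absurd (he ▸ ⟨i, h, rfl⟩) hw
  · exact he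

lemma n_not_mem {n : ℕ} : ((n:ℂ) ∉ finSet n) := fun h => lt_irrefl n (mem_finSet_iff.mp h)

/-- extend a configuration of `finSet n` by one point for coordinate `n`. -/
def extFun {n : ℕ} (u : Config (finSet n)) (z : ℂ) : ↥(finSet (n+1)) → ℂ :=
  fun w => if h : (w:ℂ) ∈ finSet n then u.1 ⟨w, h⟩ else z

lemma extFun_inj {n : ℕ} (u : Config (finSet n)) (z : ℂ)
    (hz : ∀ y : ↥(finSet n), z ≠ u.1 y) : Function.Injective (extFun u z) := by
  intro a b hab
  unfold extFun at hab
  by_cases ha : (a:ℂ) ∈ finSet n <;> by_cases hb : (b:ℂ) ∈ finSet n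
  · rw [dif_pos ha, dif_pos hb] at hab
    have := u.2 hab
    have h2 := Subtype.ext_iff.mp this
    exact Subtype.ext h2
  · rw [dif_pos ha, dif_neg hb] at hab
    exact absurd hab.symm (hz ⟨a, ha⟩)
  · rw [dif_neg ha, dif_pos hb] at hab
    exact absurd hab (hz ⟨b, hb⟩)
  · rw [dif_neg ha, dif_neg hb] at hab
    exact Subtype.ext ((val_eq_n a ha).trans (val_eq_n b hb).symm)

def extCfg {n : ℕ} (u : Config (finSet n)) (z : ℂ)
    (hz : ∀ y : ↥(finSet n), z ≠ u.1 y) : Config (finSet (n+1)) :=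
  ⟨extFun u z, extFun_inj u z hz⟩

lemma extCfg_restrict {n : ℕ} (u : Config (finSet n)) (z : ℂ) (hz) :
    restrictConfig (finSet_mono n.le_succ) (extCfg u z hz) = u := by
  apply Subtype.ext
  funext y
  show extFun u z ⟨y.1, finSet_mono n.le_succ y.2⟩ = u.1 y
  unfold extFun
  rw [dif_pos y.2]

lemma extCfg_coord_n {n : ℕ} (u : Config (finSet n)) (z : ℂ) (hz) :
    (extCfg u z hz).1 (el n n.lt_succ_self) = z := by
  show extFun u z (el n n.lt_succ_self) = z
  unfold extFun
  exact dif_neg n_not_mem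

lemma idConfig_coord {X : Set ℂ} (w : ↥X) : (idConfig X).1 w = (w : ℂ) := rfl

lemma hz_id {n : ℕ} : ∀ y : ↥(finSet n), ((n:ℂ)) ≠ (idConfig (finSet n)).1 y := by
  intro y he
  exact n_not_mem (by rw [he]; exact y.2)

lemma extCfg_id {n : ℕ} :
    extCfg (idConfig (finSet n)) ((n:ℂ)) hz_id = idConfig (finSet (n+1)) := by
  apply Subtype.ext
  funext w
  show extFun (idConfig (finSet n)) ((n:ℂ)) w = (w : ℂ)
  unfold extFun
  by_cases h : (w:ℂ) ∈ finSet n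
  · rw [dif_pos h]; rfl
  · rw [dif_neg h, val_eq_n w h]

lemma continuous_extFun {n : ℕ} {Y : Type*} [TopologicalSpace Y]
    {U : Y → Config (finSet n)} {Z : Y → ℂ}
    (hU : Continuous fun y => (U y).1) (hZ : Continuous Z) :
    Continuous fun y => extFun (U y) (Z y) := by
  apply continuous_pi
  intro w
  unfold extFun
  by_cases h : (w:ℂ) ∈ finSet n
  · simp only [dif_pos h]
    exact (continuous_apply _).comp hU
  · simp only [dif_neg h]
    exact hZ

lemma restrict_apply {X Y : Set ℂ} (h : Y ⊆ X) (u : Config X) (y : ↥Y) :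
    (restrictConfig h u).1 y = u.1 ⟨y.1, h y.2⟩ := rfl

lemma restrict_id {X Y : Set ℂ} (h : Y ⊆ X) :
    restrictConfig h (idConfig X) = idConfig Y := Subtype.ext (funext fun y => rfl)

lemma restrict_comp {X Y Z : Set ℂ} (h1 : Y ⊆ X) (h2 : Z ⊆ Y) (u : Config X) :
    restrictConfig h2 (restrictConfig h1 u) = restrictConfig (h2.trans h1) u :=
  Subtype.ext (funext fun y => rfl)


/-- Inductive data: a nullhomotopy of `f` restricted to `finSet n`, rel endpoints,
frozen after time `1 - 2⁻ⁿ`. -/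
structure StepData (f : C(I, Config omegaSet)) (n : ℕ) where
  H : C(I × I, Config (finSet n))
  h0 : ∀ t, H (0, t) = restrictPath (finSet_subset_omegaSet n) f t
  hside0 : ∀ s, H (s, 0) = idConfig (finSet n)
  hside1 : ∀ s, H (s, 1) = idConfig (finSet n)
  hfreeze : ∀ s t : I, 1 - (2:ℝ)⁻¹^n ≤ (s:ℝ) → H (s, t) = idConfig (finSet n)

lemma an_nonneg (n : ℕ) : 0 ≤ 1 - (2:ℝ)⁻¹^n := by
  have : (2:ℝ)⁻¹^n ≤ 1 := pow_le_one₀ (by norm_num) (by norm_num)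
  linarith

lemma an_le_one (n : ℕ) : 1 - (2:ℝ)⁻¹^n ≤ 1 := by
  have : (0:ℝ) < (2:ℝ)⁻¹^n := by positivity
  linarith

lemma an_lt_an1 (n : ℕ) : 1 - (2:ℝ)⁻¹^n < 1 - (2:ℝ)⁻¹^(n+1) := by
  have h : (2:ℝ)⁻¹^(n+1) < (2:ℝ)⁻¹^n := by
    apply pow_lt_pow_right_of_lt_one₀ (by norm_num) (by norm_num)
    omega
  linarith

section StepLemma

variable (f : BraidPath omegaSet) (n : ℕ)

lemma step_lemma (hpure : f.toFun 1 = idConfig omegaSet) (d : StepData f.toFun n)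
    (hn : (restrictPath (finSet_subset_omegaSet (n+1)) f.toFun).HomotopicRel
          (ContinuousMap.const I (idConfig (finSet (n+1)))) {0, 1}) :
    ∃ d' : StepData f.toFun (n+1), ∀ w : I × I,
      restrictConfig (finSet_mono n.le_succ) (d'.H w) = d.H w := by
  classical
  haveI : Fintype ↥(finSet n) := Fintype.ofFinite _
  obtain ⟨G⟩ := hn
  set fn1 : C(I, Config (finSet (n+1))) := restrictPath (finSet_subset_omegaSet (n+1)) f.toFun
    with hfn1
  have hf0 : fn1 0 = idConfig (finSet (n+1)) := by
    have h : fn1 0 = restrictConfig (finSet_subset_omegaSet (n+1)) (f.toFun 0) := rfl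
    rw [h, f.source', restrict_id]
  have hf1 : fn1 1 = idConfig (finSet (n+1)) := by
    have h : fn1 1 = restrictConfig (finSet_subset_omegaSet (n+1)) (f.toFun 1) := rfl
    rw [h]
    show restrictConfig _ (f.toFun 1) = _
    rw [hpure, restrict_id]
  set GG : C(I × I, Config (finSet (n+1))) := G.toHomotopy.toContinuousMap with hGG
  have hG0 : ∀ t, GG (0, t) = fn1 t := fun t => G.toHomotopy.apply_zero t
  have hG1 : ∀ t, GG (1, t) = idConfig (finSet (n+1)) := fun t => G.toHomotopy.apply_one t
  have hGs0 : ∀ s, GG (s, 0) = idConfig (finSet (n+1)) := fun s => by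
    have := G.eq_fst s (show (0:I) ∈ ({0,1} : Set I) from Set.mem_insert _ _)
    rw [hf0] at this; exact this
  have hGs1 : ∀ s, GG (s, 1) = idConfig (finSet (n+1)) := fun s => by
    have := G.eq_fst s (show (1:I) ∈ ({0,1} : Set I) from
      Set.mem_insert_of_mem _ rfl)
    rw [hf1] at this; exact this
  set an : ℝ := 1 - (2:ℝ)⁻¹^n with han
  set an1 : ℝ := 1 - (2:ℝ)⁻¹^(n+1) with han1
  -- ### Lifting 1 : lift the homotopy d.H starting from the extra strand of f
  set nω : ↥omegaSet := ⟨(n:ℂ), ⟨n, rfl⟩⟩ with hnω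
  set b1 : C(I × I, ↥(finSet n) → ℂ) :=
    ⟨fun w => ((d.H (w.2, w.1)).1 : ↥(finSet n) → ℂ), by
      apply continuous_pi
      intro i
      exact (continuous_apply i).comp (continuous_subtype_val.comp
        (d.H.continuous.comp (continuous_snd.prodMk continuous_fst)))⟩ with hb1def
  have hb1 : ∀ w, ∀ i j : ↥(finSet n), i ≠ j → b1 w i ≠ b1 w j := by
    intro w i j hij he
    exact hij ((d.H (w.2, w.1)).2 he)
  set init1 : C(I, ℂ) := ⟨fun t => (f.toFun t).1 nω, by
    exact (continuous_apply nω).comp (continuous_subtype_val.comp f.toFun.continuous)⟩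
    with hinit1def
  have hinit1 : ∀ t i, init1 t ≠ b1 (t, 0) i := by
    intro t i he
    have hb : b1 (t, 0) i = (f.toFun t).1 ⟨i.1, finSet_subset_omegaSet n i.2⟩ := by
      show (d.H (0, t)).1 i = _
      rw [d.h0 t]
      rfl
    rw [hb] at he
    have := (f.toFun t).2 he
    have hval : (n:ℂ) = i.1 := congrArg Subtype.val this
    exact n_not_mem (hval ▸ i.2)
  obtain ⟨Z1, hZ1av, hZ1init, hZ1st⟩ := lift_point b1 hb1 init1 hinit1
  have hz1 : ∀ t s : I, ∀ y : ↥(finSet n), Z1 (t, s) ≠ (d.H (s, t)).1 y :=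
    fun t s y => hZ1av (t, s) y
  set Ht : I × I → Config (finSet (n+1)) :=
    fun w => extCfg (d.H (w.2, w.1)) (Z1 w) (fun y => hz1 w.1 w.2 y) with hHtdef
  have hHtcont : Continuous Ht := by
    apply Continuous.subtype_mk
    exact continuous_extFun
      (continuous_subtype_val.comp (d.H.continuous.comp
        (continuous_snd.prodMk continuous_fst))) Z1.continuous
  have P1 : ∀ t s, restrictConfig (finSet_mono n.le_succ) (Ht (t, s)) = d.H (s, t) :=
    fun t s => extCfg_restrict _ _ _
  -- initial slice is fn1
  have P2 : ∀ t, Ht (t, 0) = fn1 t := by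
    intro t
    apply Subtype.ext
    funext w
    show extFun (d.H (0, t)) (Z1 (t, 0)) w = (fn1 t).1 w
    unfold extFun
    by_cases h : (w:ℂ) ∈ finSet n
    · rw [dif_pos h, d.h0 t]
      rfl
    · rw [dif_neg h, hZ1init t]
      show (f.toFun t).1 nω = (f.toFun t).1 ⟨w.1, finSet_subset_omegaSet (n+1) w.2⟩
      have hnwe : nω = ⟨w.1, finSet_subset_omegaSet (n+1) w.2⟩ :=
        Subtype.ext (val_eq_n w h).symm
      rw [hnwe]
  -- stationarity-derived facts
  have hstat : ∀ (t : I) (s s' : I), s ≤ s' →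
      (∀ v : I, s ≤ v → v ≤ s' → d.H (v, t) = d.H (s, t)) → Z1 (t, s') = Z1 (t, s) := by
    intro t s s' hss hconst
    apply hZ1st t s s' hss
    intro v hv1 hv2
    show ((d.H (v, t)).1 : _) = ((d.H (s, t)).1 : _)
    rw [hconst v hv1 hv2]
  set lam : I → ℂ := fun t => Z1 (t, 1) with hlam
  have L1freeze : ∀ (t : I) (s : I), an ≤ (s:ℝ) → Z1 (t, s) = lam t := by
    intro t s hs
    have h1 : s ≤ (1:I) := by
      rw [← Subtype.coe_le_coe]; exact s.2.2
    exact (hstat t s 1 h1 (fun v hv1 _ => by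
      rw [d.hfreeze v t (le_trans hs (Subtype.coe_le_coe.mpr hv1)),
        d.hfreeze s t hs])).symm
  have Ledge0 : ∀ s : I, Z1 (0, s) = (n:ℂ) := by
    intro s
    have h0 : (0:I) ≤ s := by rw [← Subtype.coe_le_coe]; exact s.2.1
    have := hstat 0 0 s h0 (fun v _ _ => by rw [d.hside0 v, d.hside0 0])
    rw [this, hZ1init 0]
    show (f.toFun 0).1 nω = (n:ℂ)
    rw [show f.toFun 0 = idConfig omegaSet from f.source']
    rfl
  have Ledge1 : ∀ s : I, Z1 (1, s) = (n:ℂ) := by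
    intro s
    have h0 : (0:I) ≤ s := by rw [← Subtype.coe_le_coe]; exact s.2.1
    have := hstat 1 0 s h0 (fun v _ _ => by rw [d.hside1 v, d.hside1 0])
    rw [this, hZ1init 1]
    show (f.toFun 1).1 nω = (n:ℂ)
    rw [show f.toFun 1 = idConfig omegaSet from hpure]
    rfl
  have hlam_avoid : ∀ t : I, ∀ y : ↥(finSet n), lam t ≠ (idConfig (finSet n)).1 y := by
    intro t y he
    have h1 := hz1 t 1 y
    rw [d.hfreeze 1 t (by rw [show ((1:I):ℝ) = 1 from rfl]; exact an_le_one n)] at h1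
    exact h1 he
  have hlam0 : lam 0 = (n:ℂ) := Ledge0 1
  have hlam1 : lam 1 = (n:ℂ) := Ledge1 1
  set Lam : I → Config (finSet (n+1)) :=
    fun t => extCfg (idConfig (finSet n)) (lam t) (hlam_avoid t) with hLam
  have P3 : ∀ t s : I, an ≤ (s:ℝ) → Ht (t, s) = Lam t := by
    intro t s hs
    apply Subtype.ext
    show extFun (d.H (s, t)) (Z1 (t, s)) = extFun (idConfig (finSet n)) (lam t)
    rw [d.hfreeze s t hs, L1freeze t s hs]
  have P4 : ∀ s, Ht (0, s) = idConfig (finSet (n+1)) := by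
    intro s
    have he : Ht (0, s) = extCfg (idConfig (finSet n)) ((n:ℂ)) hz_id := by
      apply Subtype.ext
      show extFun (d.H (s, 0)) (Z1 (0, s)) = extFun (idConfig (finSet n)) ((n:ℂ))
      rw [d.hside0 s, Ledge0 s]
    rw [he, extCfg_id]
  have P5 : ∀ s, Ht (1, s) = idConfig (finSet (n+1)) := by
    intro s
    have he : Ht (1, s) = extCfg (idConfig (finSet n)) ((n:ℂ)) hz_id := by
      apply Subtype.ext
      show extFun (d.H (s, 1)) (Z1 (1, s)) = extFun (idConfig (finSet n)) ((n:ℂ))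
      rw [d.hside1 s, Ledge1 s]
    rw [he, extCfg_id]
  -- ### the base square A and auxiliary squares
  set q : C(Config (finSet (n+1)), Config (finSet n)) :=
    restrictConfig (finSet_mono n.le_succ) with hqdef
  set A : ℝ × ℝ → Config (finSet n) := fun p =>
    if p.1 ≤ 1/2 then d.H (pr (1 - 2*p.1), pr p.2)
    else q (GG (pr (2*p.1 - 1), pr p.2)) with hAdef
  have hAeq : ∀ p : ℝ × ℝ, A p =
      if p.1 ≤ 1/2 then d.H (pr (1 - 2*p.1), pr p.2)
      else q (GG (pr (2*p.1 - 1), pr p.2)) := fun p => rfl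
  have hprcoe : Continuous fun x : ℝ => ((pr x : I) : ℝ) :=
    continuous_subtype_val.comp continuous_pr
  have hAcont : Continuous A := by
    rw [hAdef]
    apply Continuous.if_le
    · exact d.H.continuous.comp ((continuous_pr.comp (by fun_prop)).prodMk
        (continuous_pr.comp continuous_snd))
    · exact q.continuous.comp (GG.continuous.comp ((continuous_pr.comp (by fun_prop)).prodMk
        (continuous_pr.comp continuous_snd)))
    · exact continuous_fst
    · exact continuous_const
    · intro p hp
      rw [hp]
      have e1 : (1 : ℝ) - 2*(1/2) = 0 := by norm_num
      have e2 : (2 : ℝ)*(1/2) - 1 = 0 := by norm_num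
      rw [e1, e2, pr_of_le le_rfl, d.h0, hG0]
      rfl
  have hA_le0 : ∀ p : ℝ × ℝ, p.1 ≤ 0 → A p = idConfig (finSet n) := by
    intro p hp
    rw [hAeq, if_pos (by linarith)]
    rw [pr_of_ge (by linarith)]
    exact d.hfreeze 1 (pr p.2) (by rw [show ((1:I):ℝ) = 1 from rfl]; exact an_le_one n)
  have hA_ge1 : ∀ p : ℝ × ℝ, 1 ≤ p.1 → A p = idConfig (finSet n) := by
    intro p hp
    rw [hAeq, if_neg (by push_neg; linarith)]
    rw [pr_of_ge (by linarith), hG1]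
    exact restrict_id _
  have hA_t0 : ∀ p : ℝ × ℝ, p.2 ≤ 0 → A p = idConfig (finSet n) := by
    intro p hp
    rw [hAeq]
    split_ifs with h
    · rw [pr_of_le hp]; exact d.hside0 _
    · rw [pr_of_le hp, hGs0]; exact restrict_id _
  have hA_t1 : ∀ p : ℝ × ℝ, 1 ≤ p.2 → A p = idConfig (finSet n) := by
    intro p hp
    rw [hAeq]
    split_ifs with h
    · rw [pr_of_ge hp]; exact d.hside1 _
    · rw [pr_of_ge hp, hGs1]; exact restrict_id _
  -- ### the section σ of q and the fibre path γ
  set Rad : Config (finSet n) → ℝ :=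
    fun u => (n:ℝ) + 1 + ∑ i, ‖u.1 i‖ with hRaddef
  have hRadcont : Continuous Rad := by
    apply Continuous.add continuous_const
    apply continuous_finset_sum
    intro i _
    exact continuous_norm.comp ((continuous_apply i).comp continuous_subtype_val)
  have hRadgt : ∀ (u : Config (finSet n)) (y : ↥(finSet n)), ‖u.1 y‖ < Rad u := by
    intro u y
    have hle : ‖u.1 y‖ ≤ ∑ i, ‖u.1 i‖ :=
      Finset.single_le_sum (f := fun i => ‖u.1 i‖)
        (fun i _ => norm_nonneg _) (Finset.mem_univ y)
    have hpos : (0:ℝ) < (n:ℝ) + 1 := by positivity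
    rw [hRaddef]
    simp only
    linarith
  have hRadpos : ∀ u : Config (finSet n), 0 ≤ Rad u := by
    intro u
    have := hRadgt u
    rw [hRaddef]; simp only
    have hsum : 0 ≤ ∑ i : ↥(finSet n), ‖u.1 i‖ :=
      Finset.sum_nonneg (fun i _ => norm_nonneg _)
    positivity
  have hσz : ∀ (u : Config (finSet n)) (y : ↥(finSet n)), ((Rad u : ℝ):ℂ) ≠ u.1 y := by
    intro u y he
    have h1 : ‖((Rad u : ℝ):ℂ)‖ = Rad u := by
      rw [Complex.norm_real, Real.norm_eq_abs]
      exact abs_of_nonneg (hRadpos u)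
    rw [he] at h1
    exact absurd h1 (ne_of_lt (hRadgt u y))
  set σc : Config (finSet n) → Config (finSet (n+1)) :=
    fun u => extCfg u ((Rad u : ℝ):ℂ) (hσz u) with hσcdef
  have hσcont : Continuous σc := by
    apply Continuous.subtype_mk
    exact continuous_extFun continuous_subtype_val (Complex.continuous_ofReal.comp hRadcont)
  have hσq : ∀ u, q (σc u) = u := fun u => extCfg_restrict _ _ _
  set R0 : ℝ := Rad (idConfig (finSet n)) with hR0def
  have hR0ge : (n:ℝ) ≤ R0 := by
    rw [hR0def, hRaddef]
    simp only
    have hsum : 0 ≤ ∑ i : ↥(finSet n), ‖(idConfig (finSet n)).1 i‖ :=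
      Finset.sum_nonneg (fun i _ => norm_nonneg _)
    linarith
  have hγz : ∀ x : ℝ, ∀ y : ↥(finSet n),
      ((((n:ℝ) + (pr x : ℝ) * (R0 - (n:ℝ))) : ℝ):ℂ) ≠ (idConfig (finSet n)).1 y := by
    intro x y he
    have hy : (idConfig (finSet n)).1 y = ((idxv y : ℕ):ℂ) := (idxv_coe y).symm
    rw [hy] at he
    have hcast : ((n:ℝ) + (pr x:ℝ) * (R0 - (n:ℝ))) = ((idxv y : ℕ) : ℝ) := by
      exact_mod_cast he
    have hlt : ((idxv y : ℕ) : ℝ) < (n:ℝ) := by exact_mod_cast idxv_lt y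
    have h0 : 0 ≤ (pr x : ℝ) := (pr x).2.1
    nlinarith [hR0ge]
  set γ : ℝ → Config (finSet (n+1)) := fun x =>
    extCfg (idConfig (finSet n)) ((((n:ℝ) + (pr x : ℝ) * (R0 - (n:ℝ))) : ℝ):ℂ) (hγz x)
    with hγdef
  have hγcont : Continuous γ := by
    apply Continuous.subtype_mk
    exact continuous_extFun continuous_const
      (Complex.continuous_ofReal.comp (by fun_prop))
  have hidext : ∀ (z : ℂ) (hz : ∀ y : ↥(finSet n), z ≠ (idConfig (finSet n)).1 y),
      z = (n:ℂ) → extCfg (idConfig (finSet n)) z hz = idConfig (finSet (n+1)) := by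
    intro z hz hzn
    subst hzn
    apply Subtype.ext
    exact congrArg Subtype.val (extCfg_id (n := n))
  have hγ0 : ∀ x : ℝ, x ≤ 0 → γ x = idConfig (finSet (n+1)) := by
    intro x hx
    rw [hγdef]
    apply hidext
    rw [pr_of_le hx]
    push_cast
    ring
  have hγ1 : ∀ x : ℝ, 1 ≤ x → γ x = σc (idConfig (finSet n)) := by
    intro x hx
    rw [hγdef, hσcdef]
    apply Subtype.ext
    show extFun _ _ = extFun _ _
    rw [pr_of_ge hx, ← hR0def]
    norm_num
  have hγq : ∀ x, q (γ x) = idConfig (finSet n) := fun x => extCfg_restrict _ _ _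
  -- ### tent and the reparametrisations
  set tent : ℝ → ℝ := fun t => min (3*t) (min 1 (3 - 3*t)) with htentdef
  have htentcont : Continuous tent := by rw [htentdef]; fun_prop
  set φt : ℝ → ℝ := fun t => min 1 (max 0 (3*t - 1)) with hφtdef
  have hφtcont : Continuous φt := by rw [hφtdef]; fun_prop
  have hφt0 : ∀ t : ℝ, t ≤ 1/3 → φt t = 0 := by
    intro t ht
    rw [hφtdef]
    simp only
    rw [max_eq_left (by linarith), min_eq_right (by norm_num)]
  have hφtmid : ∀ t : ℝ, 1/3 ≤ t → t ≤ 2/3 → φt t = 3*t - 1 := by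
    intro t h1 h2
    rw [hφtdef]
    simp only
    rw [max_eq_right (by linarith), min_eq_right (by linarith)]
  have hφt1 : ∀ t : ℝ, 2/3 ≤ t → φt t = 1 := by
    intro t ht
    rw [hφtdef]
    simp only
    rw [max_eq_right (by linarith), min_eq_left (by linarith)]
  -- ### squares Bh, εf, Mup, M2
  set Bh : ℝ × ℝ → Config (finSet (n+1)) := fun p =>
    if p.2 ≤ 1/3 then γ (3*p.2)
    else if p.2 ≤ 2/3 then σc (A (p.1, 3*p.2 - 1)) else γ (3 - 3*p.2) with hBhdef
  have hBheq : ∀ p : ℝ × ℝ, Bh p =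
      if p.2 ≤ 1/3 then γ (3*p.2)
      else if p.2 ≤ 2/3 then σc (A (p.1, 3*p.2 - 1)) else γ (3 - 3*p.2) := fun p => rfl
  have hBhcont : Continuous Bh := by
    rw [hBhdef]
    apply Continuous.if_le
    · exact hγcont.comp (by fun_prop)
    · apply Continuous.if_le
      · exact hσcont.comp (hAcont.comp (by fun_prop))
      · exact hγcont.comp (by fun_prop)
      · exact continuous_snd
      · exact continuous_const
      · intro p hp
        rw [hp]
        have e1 : (3:ℝ)*(2/3) - 1 = 1 := by norm_num
        have e2 : (3:ℝ) - 3*(2/3) = 1 := by norm_num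
        rw [e1, e2, hA_t1 _ (by norm_num), hγ1 _ le_rfl]
    · exact continuous_snd
    · exact continuous_const
    · intro p hp
      rw [hp]
      rw [if_pos (by norm_num : (1:ℝ)/3 ≤ 2/3)]
      have e1 : (3:ℝ)*(1/3) = 1 := by norm_num
      have e2 : (3:ℝ)*(1/3) - 1 = 0 := by norm_num
      rw [e2, e1, hA_t0 _ le_rfl, hγ1 _ le_rfl]
  have hBh_t0 : ∀ p : ℝ × ℝ, p.2 ≤ 0 → Bh p = idConfig (finSet (n+1)) := by
    intro p hp
    rw [hBheq, if_pos (by linarith)]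
    exact hγ0 _ (by linarith)
  have hBh_t1 : ∀ p : ℝ × ℝ, 1 ≤ p.2 → Bh p = idConfig (finSet (n+1)) := by
    intro p hp
    rw [hBheq, if_neg (by push_neg; linarith), if_neg (by push_neg; linarith)]
    exact hγ0 _ (by linarith)
  have hBtent : ∀ x t : ℝ, (∀ s : ℝ, A (x, s) = idConfig (finSet n)) →
      Bh (x, t) = γ (tent t) := by
    intro x t hA'
    rw [hBheq]
    simp only
    split_ifs with h1 h2
    · rw [show tent t = 3*t by
        rw [htentdef]; simp only
        rw [min_eq_left (le_min (by linarith) (by linarith))]]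
    · push_neg at h1
      rw [hA' (3*t - 1), show tent t = 1 by
        rw [htentdef]; simp only
        rw [min_eq_left (by linarith : (1:ℝ) ≤ 3 - 3*t),
          min_eq_right (by linarith : (1:ℝ) ≤ 3*t)]]
      exact (hγ1 1 le_rfl).symm
    · push_neg at h1 h2
      rw [show tent t = 3 - 3*t by
        rw [htentdef]; simp only
        rw [min_eq_right (by linarith : 3 - 3*t ≤ (1:ℝ)),
          min_eq_right (by linarith : 3 - 3*t ≤ 3*t)]]
  set εf : ℝ × ℝ → Config (finSet (n+1)) := fun p => γ ((pr p.1 : ℝ) * tent p.2) with hεfdef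
  have hεfeq : ∀ p : ℝ × ℝ, εf p = γ ((pr p.1 : ℝ) * tent p.2) := fun p => rfl
  have hεfcont : Continuous εf := by
    rw [hεfdef]
    exact hγcont.comp ((hprcoe.comp continuous_fst).mul (htentcont.comp continuous_snd))
  have htent_nonpos0 : ∀ t : ℝ, t ≤ 0 → tent t ≤ 0 := by
    intro t ht
    rw [htentdef]
    exact le_trans (min_le_left _ _) (by linarith)
  have htent_nonpos1 : ∀ t : ℝ, 1 ≤ t → tent t ≤ 0 := by
    intro t ht
    rw [htentdef]
    exact le_trans (le_trans (min_le_right _ _) (min_le_right _ _)) (by linarith)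
  have hεf0 : ∀ p : ℝ × ℝ, p.1 ≤ 0 → εf p = idConfig (finSet (n+1)) := by
    intro p hp
    rw [hεfeq]
    apply hγ0
    rw [pr_of_le hp]
    show (((0:I)):ℝ) * tent p.2 ≤ 0
    rw [show (((0:I)):ℝ) = 0 from rfl, zero_mul]
  have hεf1 : ∀ p : ℝ × ℝ, 1 ≤ p.1 → εf p = γ (tent p.2) := by
    intro p hp
    rw [hεfeq, pr_of_ge hp]
    rw [show (((1:I)):ℝ) = 1 from rfl, one_mul]
  have hεft : ∀ p : ℝ × ℝ, tent p.2 ≤ 0 → εf p = idConfig (finSet (n+1)) := by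
    intro p hp
    rw [hεfeq]
    apply hγ0
    exact mul_nonpos_of_nonneg_of_nonpos (pr p.1).2.1 hp
  set Mup : ℝ × ℝ → Config (finSet (n+1)) := fun p =>
    if p.1 ≤ 1/2 then Ht (pr p.2, pr (1 - 2*p.1)) else GG (pr (2*p.1 - 1), pr p.2) with hMupdef
  have hMupeq : ∀ p : ℝ × ℝ, Mup p =
      if p.1 ≤ 1/2 then Ht (pr p.2, pr (1 - 2*p.1)) else GG (pr (2*p.1 - 1), pr p.2) :=
    fun p => rfl
  have hMupcont : Continuous Mup := by
    rw [hMupdef]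
    apply Continuous.if_le
    · exact hHtcont.comp ((continuous_pr.comp continuous_snd).prodMk
        (continuous_pr.comp (by fun_prop)))
    · exact GG.continuous.comp ((continuous_pr.comp (by fun_prop)).prodMk
        (continuous_pr.comp continuous_snd))
    · exact continuous_fst
    · exact continuous_const
    · intro p hp
      rw [hp]
      have e1 : (1:ℝ) - 2*(1/2) = 0 := by norm_num
      have e2 : (2:ℝ)*(1/2) - 1 = 0 := by norm_num
      rw [e1, e2, pr_of_le le_rfl, P2, hG0]
  have hMup_q : ∀ p : ℝ × ℝ, q (Mup p) = A p := by
    intro p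
    rw [hMupeq, hAeq]
    split_ifs with h
    · exact P1 _ _
    · rfl
  have hMup_r0 : ∀ p : ℝ × ℝ, p.1 ≤ 0 → Mup p = Lam (pr p.2) := by
    intro p hp
    rw [hMupeq, if_pos (by linarith)]
    exact P3 _ _ (by rw [pr_of_ge (by linarith)]; exact an_le_one n)
  have hMup_r1 : ∀ p : ℝ × ℝ, 1 ≤ p.1 → Mup p = idConfig (finSet (n+1)) := by
    intro p hp
    rw [hMupeq, if_neg (by push_neg; linarith), pr_of_ge (by linarith)]
    exact hG1 _
  have hMup_t0 : ∀ p : ℝ × ℝ, p.2 ≤ 0 → Mup p = idConfig (finSet (n+1)) := by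
    intro p hp
    rw [hMupeq]
    split_ifs with h
    · rw [pr_of_le hp]; exact P4 _
    · rw [pr_of_le hp]; exact hGs0 _
  have hMup_t1 : ∀ p : ℝ × ℝ, 1 ≤ p.2 → Mup p = idConfig (finSet (n+1)) := by
    intro p hp
    rw [hMupeq]
    split_ifs with h
    · rw [pr_of_ge hp]; exact P5 _
    · rw [pr_of_ge hp]; exact hGs1 _
  set M2 : ℝ × ℝ → Config (finSet (n+1)) := fun p =>
    if p.1 ≤ 1/4 then Mup (4*p.1, p.2)
    else if p.1 ≤ 1/2 then εf (4*p.1 - 1, p.2)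
    else if p.1 ≤ 3/4 then Bh (3 - 4*p.1, p.2)
    else εf (4 - 4*p.1, p.2) with hM2def
  have hM2eq : ∀ p : ℝ × ℝ, M2 p =
      if p.1 ≤ 1/4 then Mup (4*p.1, p.2)
      else if p.1 ≤ 1/2 then εf (4*p.1 - 1, p.2)
      else if p.1 ≤ 3/4 then Bh (3 - 4*p.1, p.2)
      else εf (4 - 4*p.1, p.2) := fun p => rfl
  have hM2cont : Continuous M2 := by
    rw [hM2def]
    apply Continuous.if_le
    · exact hMupcont.comp (by fun_prop)
    · apply Continuous.if_le
      · exact hεfcont.comp (by fun_prop)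
      · apply Continuous.if_le
        · exact hBhcont.comp (by fun_prop)
        · exact hεfcont.comp (by fun_prop)
        · exact continuous_fst
        · exact continuous_const
        · intro p hp
          rw [hp]
          have e1 : (3:ℝ) - 4*(3/4) = 0 := by norm_num
          have e2 : (4:ℝ) - 4*(3/4) = 1 := by norm_num
          rw [e1, e2, hεf1 _ le_rfl, hBtent _ _ (fun s => hA_le0 _ le_rfl)]
      · exact continuous_fst
      · exact continuous_const
      · intro p hp
        rw [hp]
        rw [if_pos (by norm_num : (1:ℝ)/2 ≤ 3/4)]
        have e1 : (4:ℝ)*(1/2) - 1 = 1 := by norm_num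
        have e2 : (3:ℝ) - 4*(1/2) = 1 := by norm_num
        rw [e1, e2, hεf1 _ le_rfl, hBtent _ _ (fun s => hA_ge1 _ le_rfl)]
    · exact continuous_fst
    · exact continuous_const
    · intro p hp
      rw [hp]
      rw [if_pos (by norm_num : (1:ℝ)/4 ≤ 1/2)]
      have e2 : (4:ℝ)*(1/4) - 1 = 0 := by norm_num
      rw [e2]
      have e1 : (4:ℝ)*(1/4) = 1 := by norm_num
      rw [e1, hMup_r1 _ (le_refl 1), hεf0 _ le_rfl]
  -- ### the reparametrising square χ and the tent width w
  set wfun : ℝ → ℝ := fun r => min (4*r) (3 - 4*r) with hwdef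
  have hweq : ∀ r : ℝ, wfun r = min (4*r) (3 - 4*r) := fun r => rfl
  have hwcont : Continuous wfun := by rw [hwdef]; fun_prop
  set χ : ℝ × ℝ → ℝ := fun p =>
    if p.1 ≤ 1/4 then p.2
    else if p.1 ≤ 1/2 then (2 - 4*p.1) * p.2 + (4*p.1 - 1) * φt p.2
    else φt p.2 with hχdef
  have hχeq : ∀ p : ℝ × ℝ, χ p =
      if p.1 ≤ 1/4 then p.2
      else if p.1 ≤ 1/2 then (2 - 4*p.1) * p.2 + (4*p.1 - 1) * φt p.2
      else φt p.2 := fun p => rfl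
  have hχcont : Continuous χ := by
    rw [hχdef]
    apply Continuous.if_le
    · exact continuous_snd
    · apply Continuous.if_le
      · exact ((continuous_const.sub (by fun_prop)).mul continuous_snd).add
          ((by fun_prop : Continuous fun p : ℝ × ℝ => 4*p.1 - 1).mul
            (hφtcont.comp continuous_snd))
      · exact hφtcont.comp continuous_snd
      · exact continuous_fst
      · exact continuous_const
      · intro p hp
        rw [hp]
        ring_nf
    · exact continuous_fst
    · exact continuous_const
    · intro p hp
      rw [hp, if_pos (by norm_num : (1:ℝ)/4 ≤ 1/2)]
      ring_nf
  have hχt0 : ∀ r : ℝ, χ (r, 0) = 0 := by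
    intro r
    rw [hχeq]
    have h0 : φt (0:ℝ) = 0 := hφt0 0 (by norm_num)
    split_ifs with h1 h2
    · rfl
    · show (2 - 4*r) * 0 + (4*r - 1) * φt 0 = 0
      rw [h0]; ring
    · exact h0
  have hχt1 : ∀ r : ℝ, χ (r, 1) = 1 := by
    intro r
    rw [hχeq]
    have h0 : φt (1:ℝ) = 1 := hφt1 1 (by norm_num)
    split_ifs with h1 h2
    · rfl
    · show (2 - 4*r) * 1 + (4*r - 1) * φt 1 = 1
      rw [h0]; ring
    · exact h0
  -- ### the key identity : the restriction of M2 is the corrected base square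
  have KEY0 : ∀ r t : ℝ, q (M2 (r, t)) = A (min (wfun r) 1, χ (r, t)) := by
    intro r t
    rw [hM2eq]
    simp only
    split_ifs with h1 h2 h3
    · -- r ≤ 1/4
      have hw1 : min (wfun r) 1 = 4*r := by
        rw [hweq, min_eq_left (by linarith : 4*r ≤ 3 - 4*r)]
        exact min_eq_left (by linarith)
      have hχ1 : χ (r, t) = t := by rw [hχeq]; simp only; rw [if_pos h1]
      rw [hw1, hχ1]
      exact hMup_q (4*r, t)
    · -- 1/4 < r ≤ 1/2
      push_neg at h1
      have hw1 : min (wfun r) 1 = 1 := by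
        apply min_eq_right
        rw [hweq]
        exact le_min (by linarith) (by linarith)
      rw [hεfeq, hγq, hw1, hA_ge1 _ le_rfl]
    · -- 1/2 < r ≤ 3/4
      push_neg at h1 h2
      have hw1 : min (wfun r) 1 = 3 - 4*r := by
        rw [hweq, min_eq_right (by linarith : 3 - 4*r ≤ 4*r)]
        exact min_eq_left (by linarith)
      have hχ1 : χ (r, t) = φt t := by
        rw [hχeq]; simp only
        rw [if_neg (by push_neg; linarith), if_neg (by push_neg; linarith)]
      rw [hw1, hχ1, hBheq]
      simp only
      split_ifs with ht1 ht2
      · rw [hγq, hφt0 t ht1, hA_t0 _ le_rfl]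
      · push_neg at ht1
        rw [hσq, hφtmid t (by linarith) ht2]
      · push_neg at ht1 ht2
        rw [hγq, hφt1 t (by linarith), hA_t1 _ le_rfl]
    · -- r > 3/4
      push_neg at h1 h2 h3
      have hw1 : min (wfun r) 1 = 3 - 4*r := by
        rw [hweq, min_eq_right (by linarith : 3 - 4*r ≤ 4*r)]
        exact min_eq_left (by linarith)
      rw [hεfeq, hγq, hw1, hA_le0 _ (by linarith : 3 - 4*r ≤ 0)]
  -- ### lifting 2 : correct the defect loop inside the fibre
  set eln1 : ↥(finSet (n+1)) := el n n.lt_succ_self with heln1def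
  set b2 : C((I × I) × I, ↥(finSet n) → ℂ) :=
    ⟨fun w => (A (min (wfun ((w.1.1 : I) : ℝ)) (1 - ((w.2 : I):ℝ)),
        χ (((w.1.1 : I):ℝ), ((w.1.2 : I):ℝ)))).1, by
      apply continuous_pi
      intro i
      refine (continuous_apply i).comp (continuous_subtype_val.comp (hAcont.comp ?_))
      apply Continuous.prodMk
      · exact (hwcont.comp (continuous_subtype_val.comp
          (continuous_fst.comp continuous_fst))).min
          (continuous_const.sub (continuous_subtype_val.comp continuous_snd))
      · exact hχcont.comp ((continuous_subtype_val.comp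
          (continuous_fst.comp continuous_fst)).prodMk
          (continuous_subtype_val.comp (continuous_snd.comp continuous_fst)))⟩ with hb2def
  have hb2eq : ∀ w : (I × I) × I, b2 w = (A (min (wfun ((w.1.1 : I) : ℝ)) (1 - ((w.2 : I):ℝ)),
      χ (((w.1.1 : I):ℝ), ((w.1.2 : I):ℝ)))).1 := fun w => rfl
  have hb2 : ∀ w, ∀ i j : ↥(finSet n), i ≠ j → b2 w i ≠ b2 w j := by
    intro w i j hij he
    exact hij ((A _).2 he)
  set init2 : C(I × I, ℂ) := ⟨fun p => (M2 (((p.1:I):ℝ), ((p.2:I):ℝ))).1 eln1, by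
    exact (continuous_apply eln1).comp (continuous_subtype_val.comp (hM2cont.comp
      ((continuous_subtype_val.comp continuous_fst).prodMk
        (continuous_subtype_val.comp continuous_snd))))⟩ with hinit2def
  have hinit2eq : ∀ p : I × I, init2 p = (M2 (((p.1:I):ℝ), ((p.2:I):ℝ))).1 eln1 :=
    fun p => rfl
  have hinit2 : ∀ p i, init2 p ≠ b2 (p, 0) i := by
    intro p i he
    rw [hinit2eq, hb2eq] at he
    simp only at he
    rw [show ((((0:I)):I):ℝ) = 0 from rfl, sub_zero, ← KEY0] at he
    have he2 : (M2 (((p.1:I):ℝ), ((p.2:I):ℝ))).1 eln1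
        = (M2 (((p.1:I):ℝ), ((p.2:I):ℝ))).1 ⟨i.1, finSet_mono n.le_succ i.2⟩ := he
    have h3 := (M2 _).2 he2
    have hv : ((n:ℕ):ℂ) = i.1 := Subtype.ext_iff.mp h3
    exact n_not_mem (hv ▸ i.2)
  obtain ⟨Z2, hZ2av, hZ2init, hZ2st⟩ := lift_point b2 hb2 init2 hinit2
  have hconstZ : ∀ p : I × I, (∀ sg : I, b2 (p, sg) = b2 (p, 0)) → Z2 (p, 1) = init2 p := by
    intro p hcb
    have h01 : (0:I) ≤ (1:I) := by rw [← Subtype.coe_le_coe]; norm_num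
    have h := hZ2st p 0 1 h01 (fun v _ _ => hcb v)
    rw [h, hZ2init]
  have hζ_avoid : ∀ (p : I × I) (y : ↥(finSet n)), Z2 (p, 1) ≠ (idConfig (finSet n)).1 y := by
    intro p y he
    have hb : b2 (p, 1) y = (idConfig (finSet n)).1 y := by
      rw [hb2eq]
      rw [hA_le0 _ (by
        rw [show (((1:I)):ℝ) = 1 from rfl]
        exact le_trans (min_le_right _ _) (by norm_num))]
    exact hZ2av (p, 1) y (he.trans hb.symm)
  have hζ_r0 : ∀ t : I, Z2 ((0, t), 1) = lam t := by
    intro t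
    have hc0 : ∀ sg : I, min (wfun (((0:I)):ℝ)) (1 - (sg:ℝ)) ≤ 0 := by
      intro sg
      apply le_trans (min_le_left _ _)
      rw [show (((0:I)):ℝ) = 0 from rfl, hweq]
      norm_num
    have hcb : ∀ sg : I, b2 ((0, t), sg) = b2 ((0, t), 0) := by
      intro sg
      rw [hb2eq, hb2eq]
      simp only
      rw [hA_le0 _ (hc0 sg), hA_le0 _ (hc0 0)]
    rw [hconstZ _ hcb, hinit2eq]
    simp only
    rw [show (((0:I)):ℝ) = 0 from rfl, hM2eq]
    simp only
    rw [if_pos (by norm_num : (0:ℝ) ≤ 1/4), show (4:ℝ)*0 = 0 by ring,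
      hMup_r0 _ le_rfl, hLam]
    simp only
    rw [pr_coe]
    exact extCfg_coord_n _ _ _
  have hζ_r1 : ∀ t : I, Z2 ((1, t), 1) = ((n:ℕ):ℂ) := by
    intro t
    have hc0 : ∀ sg : I, min (wfun (((1:I)):ℝ)) (1 - (sg:ℝ)) ≤ 0 := by
      intro sg
      apply le_trans (min_le_left _ _)
      rw [show (((1:I)):ℝ) = 1 from rfl, hweq]
      norm_num
    have hcb : ∀ sg : I, b2 ((1, t), sg) = b2 ((1, t), 0) := by
      intro sg
      rw [hb2eq, hb2eq]
      simp only
      rw [hA_le0 _ (hc0 sg), hA_le0 _ (hc0 0)]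
    rw [hconstZ _ hcb, hinit2eq]
    simp only
    rw [show (((1:I)):ℝ) = 1 from rfl, hM2eq]
    simp only
    rw [if_neg (by norm_num : ¬ ((1:ℝ) ≤ 1/4)), if_neg (by norm_num : ¬ ((1:ℝ) ≤ 1/2)),
      if_neg (by norm_num : ¬ ((1:ℝ) ≤ 3/4)),
      hεf0 _ (by norm_num : (4:ℝ) - 4*1 ≤ 0)]
    rfl
  have hM2_t0 : ∀ p : ℝ × ℝ, p.2 ≤ 0 → M2 p = idConfig (finSet (n+1)) := by
    intro p hp
    rw [hM2eq]
    split_ifs with h1 h2 h3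
    · exact hMup_t0 _ hp
    · exact hεft _ (htent_nonpos0 _ hp)
    · exact hBh_t0 _ hp
    · exact hεft _ (htent_nonpos0 _ hp)
  have hM2_t1 : ∀ p : ℝ × ℝ, 1 ≤ p.2 → M2 p = idConfig (finSet (n+1)) := by
    intro p hp
    rw [hM2eq]
    split_ifs with h1 h2 h3
    · exact hMup_t1 _ hp
    · exact hεft _ (htent_nonpos1 _ hp)
    · exact hBh_t1 _ hp
    · exact hεft _ (htent_nonpos1 _ hp)
  have hζ_t0 : ∀ r : I, Z2 ((r, 0), 1) = ((n:ℕ):ℂ) := by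
    intro r
    have hcb : ∀ sg : I, b2 ((r, 0), sg) = b2 ((r, 0), 0) := by
      intro sg
      rw [hb2eq, hb2eq]
      simp only
      rw [show ((((0:I)):I):ℝ) = 0 from rfl]
      rw [hA_t0 _ (le_of_eq (hχt0 _)), hA_t0 _ (le_of_eq (hχt0 _))]
    rw [hconstZ _ hcb, hinit2eq]
    simp only
    rw [show ((((0:I)):I):ℝ) = 0 from rfl, hM2_t0 _ le_rfl]
    rfl
  have hζ_t1 : ∀ r : I, Z2 ((r, 1), 1) = ((n:ℕ):ℂ) := by
    intro r
    have hcb : ∀ sg : I, b2 ((r, 1), sg) = b2 ((r, 1), 0) := by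
      intro sg
      rw [hb2eq, hb2eq]
      simp only
      rw [show ((((1:I)):I):ℝ) = 1 from rfl]
      rw [hA_t1 _ (le_of_eq (hχt1 _).symm), hA_t1 _ (le_of_eq (hχt1 _).symm)]
    rw [hconstZ _ hcb, hinit2eq]
    simp only
    rw [show ((((1:I)):I):ℝ) = 1 from rfl, hM2_t1 _ le_rfl]
    rfl
  -- ### assemble the new homotopy
  have hanlt : an < an1 := an_lt_an1 n
  have handiff : 0 < an1 - an := by linarith
  set HN : I × I → Config (finSet (n+1)) := fun w =>
    if ((w.1 : I):ℝ) ≤ an then Ht (w.2, w.1)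
    else extCfg (idConfig (finSet n))
      (Z2 ((pr ((((w.1 : I):ℝ) - an) / (an1 - an)), w.2), 1))
      (hζ_avoid ((pr ((((w.1 : I):ℝ) - an) / (an1 - an)), w.2))) with hHNdef
  have hHNeq : ∀ w : I × I, HN w =
      if ((w.1 : I):ℝ) ≤ an then Ht (w.2, w.1)
      else extCfg (idConfig (finSet n))
        (Z2 ((pr ((((w.1 : I):ℝ) - an) / (an1 - an)), w.2), 1))
        (hζ_avoid ((pr ((((w.1 : I):ℝ) - an) / (an1 - an)), w.2))) := fun w => rfl
  have hHNcont : Continuous HN := by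
    rw [hHNdef]
    apply Continuous.if_le
    · exact hHtcont.comp (continuous_snd.prodMk continuous_fst)
    · apply Continuous.subtype_mk
      apply continuous_extFun continuous_const
      exact Z2.continuous.comp (((continuous_pr.comp (by fun_prop)).prodMk
        continuous_snd).prodMk continuous_const)
    · exact continuous_subtype_val.comp continuous_fst
    · exact continuous_const
    · intro w hw
      have h1 : Ht (w.2, w.1) = Lam w.2 := P3 w.2 w.1 (le_of_eq hw.symm)
      have h2 : pr ((((w.1:I):ℝ) - an) / (an1 - an)) = 0 := by
        rw [hw, sub_self, zero_div]
        exact pr_of_le le_rfl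
      rw [h1, h2, hLam]
      apply Subtype.ext
      show extFun _ _ = extFun _ _
      rw [hζ_r0 w.2]
  refine ⟨⟨⟨HN, hHNcont⟩, ?_, ?_, ?_, ?_⟩, ?_⟩
  · -- h0
    intro t
    show HN (0, t) = _
    rw [hHNeq, if_pos (by rw [show (((0:I)):ℝ) = 0 from rfl]; exact an_nonneg n)]
    exact P2 t
  · -- hside0
    intro s
    show HN (s, 0) = _
    rw [hHNeq]
    split_ifs with h
    · exact P4 s
    · exact hidext _ _ (hζ_t0 _)
  · -- hside1
    intro s
    show HN (s, 1) = _
    rw [hHNeq]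
    split_ifs with h
    · exact P5 s
    · exact hidext _ _ (hζ_t1 _)
  · -- hfreeze
    intro s t hs
    show HN (s, t) = _
    rw [hHNeq]
    have hs' : an1 ≤ (s:ℝ) := hs
    rw [if_neg (by push_neg; linarith)]
    have h2 : pr ((((s:I):ℝ) - an) / (an1 - an)) = 1 := by
      apply pr_of_ge
      rw [le_div_iff₀ handiff]
      linarith
    rw [h2]
    exact hidext _ _ (hζ_r1 _)
  · -- compatibility
    intro w
    obtain ⟨s, t⟩ := w
    show restrictConfig (finSet_mono n.le_succ) (HN (s, t)) = d.H (s, t)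
    rw [hHNeq]
    split_ifs with h
    · exact P1 t s
    · push_neg at h
      rw [extCfg_restrict]
      exact (d.hfreeze s t h.le).symm

end StepLemma



lemma config_zero_eq (u v : Config (finSet 0)) : u = v := by
  apply Subtype.ext
  funext w
  obtain ⟨i, hi, _⟩ := w.2
  exact absurd hi (Nat.not_lt_zero i)

def baseData (f : BraidPath omegaSet) : StepData f.toFun 0 where
  H := ContinuousMap.const _ (idConfig (finSet 0))
  h0 := fun t => config_zero_eq _ _
  hside0 := fun s => config_zero_eq _ _
  hside1 := fun s => config_zero_eq _ _
  hfreeze := fun s t _ => config_zero_eq _ _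

theorem main_backward (f : BraidPath omegaSet) (hpure : f.toFun 1 = idConfig omegaSet)
    (hres : ∀ n : ℕ,
      (restrictPath (finSet_subset_omegaSet n) f.toFun).HomotopicRel
        (ContinuousMap.const I (idConfig (finSet n))) {0, 1}) :
    f.toFun.HomotopicRel (ContinuousMap.const I (idConfig omegaSet)) {0, 1} := by
  classical
  -- the tower of compatible nullhomotopies
  let T : ∀ n, StepData f.toFun n := fun n =>
    Nat.rec (baseData f)
      (fun n dn => (step_lemma f n hpure dn (hres (n+1))).choose) n
  have hTcompat : ∀ n (w : I × I),
      restrictConfig (finSet_mono n.le_succ) ((T (n+1)).H w) = (T n).H w :=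
    fun n => (step_lemma f n hpure (T n) (hres (n+1))).choose_spec
  have hTle : ∀ (a b : ℕ), a ≤ b → ∀ (w : I × I) (z : ℂ)
      (hza : z ∈ finSet a) (hzb : z ∈ finSet b),
      ((T b).H w).1 ⟨z, hzb⟩ = ((T a).H w).1 ⟨z, hza⟩ := by
    intro a b hab
    induction b, hab using Nat.le_induction with
    | base => intro w z hza hzb; rfl
    | succ b hab IH =>
      intro w z hza hzb
      have h1 : ((T (b+1)).H w).1 ⟨z, hzb⟩
          = (restrictConfig (finSet_mono b.le_succ) ((T (b+1)).H w)).1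
            ⟨z, finSet_mono hab hza⟩ := rfl
      rw [h1, hTcompat b w]
      exact IH w z hza (finSet_mono hab hza)
  -- the glued homotopy
  have hmem : ∀ z : ↥omegaSet, (z:ℂ) ∈ finSet (z.2.choose + 1) := by
    intro z
    exact ⟨z.2.choose, Nat.lt_succ_self _, z.2.choose_spec⟩
  set HG : I × I → Config omegaSet := fun w =>
    ⟨fun z => ((T (z.2.choose + 1)).H w).1 ⟨z.1, hmem z⟩, by
      intro z z' he
      set a := z.2.choose + 1 with ha
      set b := z'.2.choose + 1 with hb
      have h1 : ((T (max a b)).H w).1 ⟨z.1, finSet_mono (le_max_left a b) (hmem z)⟩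
          = ((T a).H w).1 ⟨z.1, hmem z⟩ :=
        hTle a (max a b) (le_max_left a b) w z.1 (hmem z) _
      have h2 : ((T (max a b)).H w).1 ⟨z'.1, finSet_mono (le_max_right a b) (hmem z')⟩
          = ((T b).H w).1 ⟨z'.1, hmem z'⟩ :=
        hTle b (max a b) (le_max_right a b) w z'.1 (hmem z') _
      have he2 : ((T (max a b)).H w).1 ⟨z.1, finSet_mono (le_max_left a b) (hmem z)⟩
          = ((T (max a b)).H w).1 ⟨z'.1, finSet_mono (le_max_right a b) (hmem z')⟩ := by
        rw [h1, h2]; exact he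
      have h3 := ((T (max a b)).H w).2 he2
      have h4 := Subtype.ext_iff.mp h3
      exact Subtype.ext h4⟩ with hHGdef
  have hHGeq : ∀ (w : I × I) (z : ↥omegaSet),
      (HG w).1 z = ((T (z.2.choose + 1)).H w).1 ⟨z.1, hmem z⟩ := fun w z => rfl
  have hHGcont : Continuous HG := by
    apply Continuous.subtype_mk
    apply continuous_pi
    intro z
    exact (continuous_apply _).comp (continuous_subtype_val.comp (T _).H.continuous)
  have hHG0 : ∀ t, HG (0, t) = f.toFun t := by
    intro t
    apply Subtype.ext
    funext z
    rw [hHGeq]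
    rw [(T (z.2.choose + 1)).h0 t]
    rfl
  have hHG1 : ∀ t, HG (1, t) = idConfig omegaSet := by
    intro t
    apply Subtype.ext
    funext z
    rw [hHGeq]
    rw [(T (z.2.choose + 1)).hfreeze 1 t (by
      rw [show ((1:I):ℝ) = 1 from rfl]; exact an_le_one _)]
    rfl
  have hHGs0 : ∀ s, HG (s, 0) = f.toFun 0 := by
    intro s
    rw [f.source']
    apply Subtype.ext
    funext z
    rw [hHGeq, (T (z.2.choose + 1)).hside0 s]
    rfl
  have hHGs1 : ∀ s, HG (s, 1) = f.toFun 1 := by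
    intro s
    rw [hpure]
    apply Subtype.ext
    funext z
    rw [hHGeq, (T (z.2.choose + 1)).hside1 s]
    rfl
  exact ⟨⟨⟨⟨HG, hHGcont⟩, hHG0, hHG1⟩, by
    intro s x hx
    rcases hx with rfl | hx
    · exact hHGs0 s
    · rw [Set.mem_singleton_iff] at hx
      subst hx
      exact hHGs1 s⟩⟩

theorem main_forward (f : BraidPath omegaSet)
    (h : f.toFun.HomotopicRel (ContinuousMap.const I (idConfig omegaSet)) {0, 1}) (n : ℕ) :
    (restrictPath (finSet_subset_omegaSet n) f.toFun).HomotopicRel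
      (ContinuousMap.const I (idConfig (finSet n))) {0, 1} := by
  obtain ⟨K⟩ := h
  refine ⟨⟨⟨(restrictConfig (finSet_subset_omegaSet n)).comp K.toHomotopy.toContinuousMap,
    ?_, ?_⟩, ?_⟩⟩
  · intro t
    show restrictConfig (finSet_subset_omegaSet n) (K (0, t)) = _
    rw [K.apply_zero]
    rfl
  · intro t
    show restrictConfig (finSet_subset_omegaSet n) (K (1, t)) = _
    rw [K.apply_one]
    rfl
  · intro s x hx
    show restrictConfig (finSet_subset_omegaSet n) (K (s, x)) = _
    rw [K.eq_fst s hx]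
    rfl

end L27

/-- **Lemma 2.7**: a pure `ω`-braid `f` is homotopic rel `{0,1}` to the constant path
at `id_ω` if and only if `f|_n` is homotopic rel `{0,1}` to the constant path at `id_n`
for every `n ∈ ω`. -/
theorem pure_braid_nullhomotopic_iff_restrictions (f : BraidPath omegaSet)
    (hpure : f.toFun 1 = idConfig omegaSet) :
    f.toFun.HomotopicRel (ContinuousMap.const I (idConfig omegaSet)) {0, 1} ↔
      ∀ n : ℕ,
        (restrictPath (finSet_subset_omegaSet n) f.toFun).HomotopicRel
          (ContinuousMap.const I (idConfig (finSet n))) {0, 1} := by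
  constructor
  · exact fun h n => L27.main_forward f h n
  · exact fun h => L27.main_backward f hpure h

end
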